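/- Upper semicontinuity of the CAL optimizer set at ε = 0: the set-valued map ε ↦ S^CAL(ε) is upper semicontinuous at 0, i.e., for every open set U ⊆ (ℝ^{S×A})^{N+1} with S^CAL(0) ⊆ U, there exists δ > 0 such that S^CAL(ε) ⊆ U for every ε ∈ [0, δ). -/

import Mathlib

open scoped BigOperators

variable {S A : Type*}

/-- A stationary policy: nonnegative entries with unit row sums. -/
def IsPolicy [Fintype A] (π : S → A → ℝ) : Prop :=
  (∀ s a, 0 ≤ π s a) ∧ ∀ s, ∑ a, π s a = 1

/-- A transition kernel: nonnegative entries with unit row sums. -/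
def IsKernel [Fintype S] (P : S × A → S → ℝ) : Prop :=
  (∀ p s', 0 ≤ P p s') ∧ ∀ p, ∑ s', P p s' = 1

/-- An initial distribution. -/
def IsInitDist [Fintype S] (ν : S → ℝ) : Prop :=
  (∀ s, 0 ≤ ν s) ∧ ∑ s, ν s = 1

/-- Induced state transition matrix `P_π(s,s') = Σ_a π(s,a) P((s,a),s')`. -/
noncomputable def polMatrix [Fintype A] (P : S × A → S → ℝ) (π : S → A → ℝ) :
    Matrix S S ℝ :=
  Matrix.of fun s s' => ∑ a, π s a * P (s, a) s'

/-- Discounted state distribution `ρ_π(s) = Σ_t γ^t ((P_πᵀ)^t ν)(s)`. -/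
noncomputable def stateDist [Fintype S] [Fintype A] [DecidableEq S]
    (γ : ℝ) (ν : S → ℝ) (P : S × A → S → ℝ) (π : S → A → ℝ) (s : S) : ℝ :=
  ∑' t : ℕ, γ ^ t * (((polMatrix P π).transpose ^ t).mulVec ν s)

/-- Discounted occupation measure `μ_π(s,a) = π(s,a) ρ_π(s)`. -/
noncomputable def occ [Fintype S] [Fintype A] [DecidableEq S]
    (γ : ℝ) (ν : S → ℝ) (P : S × A → S → ℝ) (π : S → A → ℝ) (s : S) (a : A) : ℝ :=
  π s a * stateDist γ ν P π s

/-- `‖Ψᵀ μ^i_π − Ψᵀ μ^i_{π^{E_i}}‖₁`: the worst-case cost discrepancy of policy `π`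
with respect to the expert in environment `i`. -/
noncomputable def discrep {N nc : ℕ} [Fintype S] [Fintype A] [DecidableEq S]
    (γ : ℝ) (ν : S → ℝ) (P : Fin N → S × A → S → ℝ)
    (πE : Fin N → S → A → ℝ) (Ψ : S × A → Fin nc → ℝ)
    (i : Fin N) (π : S → A → ℝ) : ℝ :=
  ∑ j, |∑ p : S × A, Ψ p j *
    (occ γ ν (P i) π p.1 p.2 - occ γ ν (P i) (πE i) p.1 p.2)|

/-- The CAL objective `Σ_i ‖Ψᵀ μ^i_{π_i} − Ψᵀ μ^i_{π^{E_i}}‖₁`. -/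
noncomputable def calObj {N nc : ℕ} [Fintype S] [Fintype A] [DecidableEq S]
    (γ : ℝ) (ν : S → ℝ) (P : Fin N → S × A → S → ℝ)
    (πE : Fin N → S → A → ℝ) (Ψ : S × A → Fin nc → ℝ)
    (q : (Fin N → S → A → ℝ) × (S → A → ℝ)) : ℝ :=
  ∑ i, discrep γ ν P πE Ψ i (q.1 i)

/-- The CAL feasibility set `Φ(ε)`: tuples `(π_1,…,π_N,π_c)` of stationary policies with
`max_{(s,a)} |π_i(s,a) − π_c(s,a)| ≤ ε` for all `i`. -/
def calFeas {N : ℕ} [Fintype A] (ε : ℝ) :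
    Set ((Fin N → S → A → ℝ) × (S → A → ℝ)) :=
  {q | (∀ i, IsPolicy (q.1 i)) ∧ IsPolicy q.2 ∧
    ∀ i s a, |q.1 i s a - q.2 s a| ≤ ε}

/-- The CAL optimizer set `S^CAL(ε)`. -/
noncomputable def SCAL {N nc : ℕ} [Fintype S] [Fintype A] [DecidableEq S]
    (γ : ℝ) (ν : S → ℝ) (P : Fin N → S × A → S → ℝ)
    (πE : Fin N → S → A → ℝ) (Ψ : S × A → Fin nc → ℝ) (ε : ℝ) :
    Set ((Fin N → S → A → ℝ) × (S → A → ℝ)) :=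
  {q | q ∈ calFeas ε ∧ ∀ q' ∈ calFeas ε,
    calObj γ ν P πE Ψ q ≤ calObj γ ν P πE Ψ q'}

/-- The decoupled optimizer set `S^dec_i`. -/
noncomputable def Sdec {N nc : ℕ} [Fintype S] [Fintype A] [DecidableEq S]
    (γ : ℝ) (ν : S → ℝ) (P : Fin N → S × A → S → ℝ)
    (πE : Fin N → S → A → ℝ) (Ψ : S × A → Fin nc → ℝ) (i : Fin N) :
    Set (S → A → ℝ) :=
  {π | IsPolicy π ∧ ∀ π', IsPolicy π' →
    discrep γ ν P πE Ψ i π ≤ discrep γ ν P πE Ψ i π'}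

/-- The centralized optimizer set `S^cen`. -/
noncomputable def Scen {N nc : ℕ} [Fintype S] [Fintype A] [DecidableEq S]
    (γ : ℝ) (ν : S → ℝ) (P : Fin N → S × A → S → ℝ)
    (πE : Fin N → S → A → ℝ) (Ψ : S × A → Fin nc → ℝ) :
    Set (S → A → ℝ) :=
  {π | IsPolicy π ∧ ∀ π', IsPolicy π' →
    (∑ i, discrep γ ν P πE Ψ i π) ≤ ∑ i, discrep γ ν P πE Ψ i π'}

open Filter Topology

-- stochasticity
def StochM [Fintype S] (M : Matrix S S ℝ) : Prop :=
  (∀ s s', 0 ≤ M s s') ∧ ∀ s, ∑ s', M s s' = 1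

lemma stoch_polMatrix [Fintype S] [Fintype A] {P : S × A → S → ℝ} {π : S → A → ℝ}
    (hP : IsKernel P) (hπ : IsPolicy π) : StochM (polMatrix P π) := by
  constructor
  · intro s s'
    exact Finset.sum_nonneg fun a _ => mul_nonneg (hπ.1 s a) (hP.1 _ _)
  · intro s
    rw [show ∑ s', polMatrix P π s s' = ∑ s', ∑ a, π s a * P (s, a) s' from rfl,
      Finset.sum_comm]
    simp only [← Finset.mul_sum]
    simp [hP.2, hπ.2 s]

lemma stoch_pow [Fintype S] [DecidableEq S] {M : Matrix S S ℝ} (hM : StochM M) (t : ℕ) :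
    StochM (M ^ t) := by
  induction t with
  | zero =>
    constructor
    · intro s s'
      simp [Matrix.one_apply]
      positivity
    · intro s; simp [Matrix.one_apply]
  | succ t ih =>
    rw [pow_succ]
    constructor
    · intro s s'
      rw [Matrix.mul_apply]
      exact Finset.sum_nonneg fun k _ => mul_nonneg (ih.1 s k) (hM.1 k s')
    · intro s
      simp only [Matrix.mul_apply]
      rw [Finset.sum_comm]
      simp only [← Finset.mul_sum]
      simp [hM.2, ih.2 s]

lemma mulVec_bound [Fintype S] [DecidableEq S] {M : Matrix S S ℝ} (hM : StochM M)
    {ν : S → ℝ} (hν : IsInitDist ν) (t : ℕ) (s : S) :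
    |((M.transpose ^ t).mulVec ν) s| ≤ 1 := by
  rw [← Matrix.transpose_pow]
  have h0 : ((M ^ t).transpose.mulVec ν) s = ∑ s', (M ^ t) s' s * ν s' := by
    simp [Matrix.mulVec, dotProduct, Matrix.transpose_apply]
  have hnn : 0 ≤ ∑ s', (M ^ t) s' s * ν s' :=
    Finset.sum_nonneg fun s' _ => mul_nonneg ((stoch_pow hM t).1 s' s) (hν.1 s')
  rw [h0, abs_of_nonneg hnn]
  have hle : ∑ s', (M ^ t) s' s * ν s' ≤ ∑ s', 1 * ν s' := by
    apply Finset.sum_le_sum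
    intro s' _
    have h1 : (M ^ t) s' s ≤ 1 := by
      have h2 := (stoch_pow hM t).2 s'
      have h3 : (M ^ t) s' s ≤ ∑ s'', (M ^ t) s' s'' :=
        Finset.single_le_sum (fun s'' _ => (stoch_pow hM t).1 s' s'') (Finset.mem_univ s)
      linarith
    exact mul_le_mul_of_nonneg_right h1 (hν.1 s')
  have : ∑ s', 1 * ν s' = (1:ℝ) := by simp [hν.2]
  linarith

-- continuity of the per-term map
lemma continuous_polMatrix [Fintype S] [Fintype A] (P : S × A → S → ℝ) :
    Continuous fun π : S → A → ℝ => polMatrix P π := by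
  apply continuous_pi; intro s; apply continuous_pi; intro s'
  show Continuous fun π : S → A → ℝ => ∑ a, π s a * P (s, a) s'
  exact continuous_finset_sum _ fun a _ => by
    fun_prop

lemma continuous_term [Fintype S] [Fintype A] [DecidableEq S]
    (γ : ℝ) (ν : S → ℝ) (P : S × A → S → ℝ) (t : ℕ) (s : S) :
    Continuous fun π : S → A → ℝ =>
      γ ^ t * (((polMatrix P π).transpose ^ t).mulVec ν s) := by
  apply continuous_const.mul
  have h1 : Continuous fun π : S → A → ℝ => ((polMatrix P π).transpose ^ t) :=
    (continuous_pow t).comp (continuous_polMatrix P).matrix_transpose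
  exact (continuous_apply s).comp (h1.matrix_mulVec continuous_const)

lemma stateDist_tendsto [Fintype S] [Fintype A] [DecidableEq S]
    {γ : ℝ} (hγ0 : 0 ≤ γ) (hγ1 : γ < 1) {ν : S → ℝ} (hν : IsInitDist ν)
    {P : S × A → S → ℝ} (hP : IsKernel P)
    {ι : Type*} {F : Filter ι} {πs : ι → S → A → ℝ} {π : S → A → ℝ}
    (hπs : ∀ n, IsPolicy (πs n)) (hconv : Tendsto πs F (𝓝 π)) (s : S) :
    Tendsto (fun n => stateDist γ ν P (πs n) s) F (𝓝 (stateDist γ ν P π s)) := by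
  unfold stateDist
  refine tendsto_tsum_of_dominated_convergence (bound := fun t : ℕ => γ ^ t)
    (summable_geometric_of_lt_one hγ0 hγ1) (fun t => ?_) ?_
  · exact ((continuous_term γ ν P t s).tendsto π).comp hconv
  · filter_upwards with n t
    rw [Real.norm_eq_abs, abs_mul, abs_pow, abs_of_nonneg hγ0]
    calc γ ^ t * |(((polMatrix P (πs n)).transpose ^ t).mulVec ν) s|
        ≤ γ ^ t * 1 := by
          exact mul_le_mul_of_nonneg_left
            (mulVec_bound (stoch_polMatrix hP (hπs n)) hν t s) (by positivity)
      _ = γ ^ t := mul_one _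

-- discrep tendsto
lemma discrep_tendsto {N nc : ℕ} [Fintype S] [Fintype A] [DecidableEq S]
    {γ : ℝ} (hγ0 : 0 ≤ γ) (hγ1 : γ < 1) {ν : S → ℝ} (hν : IsInitDist ν)
    {P : Fin N → S × A → S → ℝ} (hP : ∀ i, IsKernel (P i))
    (πE : Fin N → S → A → ℝ) (Ψ : S × A → Fin nc → ℝ) (i : Fin N)
    {ι : Type*} {F : Filter ι} {πs : ι → S → A → ℝ} {π : S → A → ℝ}
    (hπs : ∀ n, IsPolicy (πs n)) (hconv : Tendsto πs F (𝓝 π)) :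
    Tendsto (fun n => discrep γ ν P πE Ψ i (πs n)) F (𝓝 (discrep γ ν P πE Ψ i π)) := by
  unfold discrep
  refine tendsto_finset_sum _ fun j _ => Tendsto.abs ?_
  refine tendsto_finset_sum _ fun p _ => Tendsto.const_mul _ (Tendsto.sub ?_ tendsto_const_nhds)
  unfold occ
  refine Tendsto.mul ?_ (stateDist_tendsto hγ0 hγ1 hν (hP i) hπs hconv p.1)
  exact (((continuous_apply p.2).comp (continuous_apply p.1)).tendsto π).comp hconv

-- the policy set is closed
lemma isClosed_polSet [Fintype S] [Fintype A] :
    IsClosed {π : S → A → ℝ | IsPolicy π} := by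
  have : {π : S → A → ℝ | IsPolicy π} =
      (⋂ s, ⋂ a, {π : S → A → ℝ | 0 ≤ π s a}) ∩ ⋂ s, {π : S → A → ℝ | ∑ a, π s a = 1} := by
    ext π
    simp only [Set.mem_setOf_eq, Set.mem_inter_iff, Set.mem_iInter, IsPolicy]
  rw [this]
  refine IsClosed.inter (isClosed_iInter fun s => isClosed_iInter fun a => ?_)
    (isClosed_iInter fun s => ?_)
  · exact isClosed_le continuous_const ((continuous_apply a).comp (continuous_apply s))
  · exact isClosed_eq (continuous_finset_sum _ fun a _ =>
      (continuous_apply a).comp (continuous_apply s)) continuous_const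

lemma polSet_norm_le [Fintype S] [Fintype A] {π : S → A → ℝ} (hπ : IsPolicy π) :
    ∀ s a, |π s a| ≤ 1 := by
  intro s a
  rw [abs_of_nonneg (hπ.1 s a)]
  have := hπ.2 s
  have h3 : π s a ≤ ∑ a', π s a' :=
    Finset.single_le_sum (fun a' _ => hπ.1 s a') (Finset.mem_univ a)
  linarith

-- compactness of the constraint set K
lemma isCompact_K {N : ℕ} [Fintype S] [Fintype A] :
    IsCompact {q : (Fin N → S → A → ℝ) × (S → A → ℝ) |
      (∀ i, IsPolicy (q.1 i)) ∧ IsPolicy q.2} := by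
  have hclosed : IsClosed {q : (Fin N → S → A → ℝ) × (S → A → ℝ) |
      (∀ i, IsPolicy (q.1 i)) ∧ IsPolicy q.2} := by
    have h1 : IsClosed {q : (Fin N → S → A → ℝ) × (S → A → ℝ) | ∀ i, IsPolicy (q.1 i)} := by
      have : {q : (Fin N → S → A → ℝ) × (S → A → ℝ) | ∀ i, IsPolicy (q.1 i)} =
          ⋂ i, (fun q : (Fin N → S → A → ℝ) × (S → A → ℝ) => q.1 i) ⁻¹'
            {π | IsPolicy π} := by
        ext q; simp
      rw [this]
      exact isClosed_iInter fun i =>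
        isClosed_polSet.preimage ((continuous_apply i).comp continuous_fst)
    exact h1.inter (isClosed_polSet.preimage continuous_snd)
  refine (isCompact_closedBall (0 : (Fin N → S → A → ℝ) × (S → A → ℝ)) 1).of_isClosed_subset
    hclosed ?_
  intro q hq
  rw [Metric.mem_closedBall, dist_zero_right, Prod.norm_def]
  refine max_le ?_ ?_
  · rw [pi_norm_le_iff_of_nonneg zero_le_one]
    intro i
    rw [pi_norm_le_iff_of_nonneg zero_le_one]
    intro s
    rw [pi_norm_le_iff_of_nonneg zero_le_one]
    intro a
    simpa [Real.norm_eq_abs] using polSet_norm_le (hq.1 i) s a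
  · rw [pi_norm_le_iff_of_nonneg zero_le_one]
    intro s
    rw [pi_norm_le_iff_of_nonneg zero_le_one]
    intro a
    simpa [Real.norm_eq_abs] using polSet_norm_le hq.2 s a

/-- upper semicontinuity of the CAL optimizer set at `ε = 0`:
for every open set `U` containing `S^CAL(0)` there is `δ > 0` with
`S^CAL(ε) ⊆ U` for every `ε ∈ [0, δ)`. -/
theorem stmt8 [Fintype S] [Fintype A] [Nonempty S] [Nonempty A] [DecidableEq S]
    {N nc : ℕ}
    (γ : ℝ) (hγ : γ ∈ Set.Ioo (0 : ℝ) 1)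
    (ν : S → ℝ) (hν : IsInitDist ν)
    (P : Fin N → S × A → S → ℝ) (hP : ∀ i, IsKernel (P i))
    (πE : Fin N → S → A → ℝ) (hπE : ∀ i, IsPolicy (πE i))
    (Ψ : S × A → Fin nc → ℝ)
    (U : Set ((Fin N → S → A → ℝ) × (S → A → ℝ))) (hU : IsOpen U)
    (hU0 : SCAL γ ν P πE Ψ 0 ⊆ U) :
    ∃ δ > 0, ∀ ε : ℝ, 0 ≤ ε → ε < δ → SCAL γ ν P πE Ψ ε ⊆ U := by
  obtain ⟨hγ0, hγ1⟩ := hγ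
  by_contra hcon
  push_neg at hcon
  have hex : ∀ n : ℕ, ∃ ε : ℝ, 0 ≤ ε ∧ ε < 1 / ((n : ℝ) + 1) ∧
      ∃ q, q ∈ SCAL γ ν P πE Ψ ε ∧ q ∉ U := by
    intro n
    obtain ⟨ε, hε0, hεlt, hns⟩ := hcon (1 / ((n : ℝ) + 1)) (by positivity)
    obtain ⟨q, hq1, hq2⟩ := Set.not_subset.mp hns
    exact ⟨ε, hε0, hεlt, q, hq1, hq2⟩
  choose ε hε0 hεlt q hqS hqU using hex
  have hεtend : Filter.Tendsto ε Filter.atTop (𝓝 0) :=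
    squeeze_zero hε0 (fun n => (hεlt n).le) tendsto_one_div_add_atTop_nhds_zero_nat
  have hqK : ∀ n, q n ∈ {q : (Fin N → S → A → ℝ) × (S → A → ℝ) |
      (∀ i, IsPolicy (q.1 i)) ∧ IsPolicy q.2} :=
    fun n => ⟨(hqS n).1.1, (hqS n).1.2.1⟩
  obtain ⟨qbar, hqbarK, φ, hφ, hconv⟩ := isCompact_K.tendsto_subseq hqK
  have hεφ : Filter.Tendsto (fun n => ε (φ n)) Filter.atTop (𝓝 0) :=
    hεtend.comp hφ.tendsto_atTop
  have hfeas : qbar ∈ calFeas (N := N) (S := S) (A := A) 0 := by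
    refine ⟨hqbarK.1, hqbarK.2, ?_⟩
    intro i s a
    have hc1 : Continuous fun r : (Fin N → S → A → ℝ) × (S → A → ℝ) => r.1 i s a := by
      fun_prop
    have hc2 : Continuous fun r : (Fin N → S → A → ℝ) × (S → A → ℝ) => r.2 s a := by
      fun_prop
    have h1a : Filter.Tendsto (fun n => (q (φ n)).1 i s a) Filter.atTop (𝓝 (qbar.1 i s a)) :=
      (hc1.tendsto qbar).comp hconv
    have h1b : Filter.Tendsto (fun n => (q (φ n)).2 s a) Filter.atTop (𝓝 (qbar.2 s a)) :=
      (hc2.tendsto qbar).comp hconv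
    have h1 : Filter.Tendsto (fun n => |(q (φ n)).1 i s a - (q (φ n)).2 s a|)
        Filter.atTop (𝓝 |qbar.1 i s a - qbar.2 s a|) := (h1a.sub h1b).abs
    exact le_of_tendsto_of_tendsto' h1 hεφ fun n => (hqS (φ n)).1.2.2 i s a
  have hopt : qbar ∈ SCAL γ ν P πE Ψ 0 := by
    refine ⟨hfeas, ?_⟩
    intro q' hq'
    have hcal : Filter.Tendsto (fun n => calObj γ ν P πE Ψ (q (φ n)))
        Filter.atTop (𝓝 (calObj γ ν P πE Ψ qbar)) := by
      unfold calObj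
      refine tendsto_finset_sum _ fun i _ => ?_
      have hci : Continuous fun r : (Fin N → S → A → ℝ) × (S → A → ℝ) => r.1 i := by
        fun_prop
      have hti : Filter.Tendsto (fun n => (q (φ n)).1 i) Filter.atTop (𝓝 (qbar.1 i)) :=
        (hci.tendsto qbar).comp hconv
      exact discrep_tendsto hγ0.le hγ1 hν hP πE Ψ i (fun n => (hqS (φ n)).1.1 i) hti
    refine le_of_tendsto hcal (Filter.Eventually.of_forall fun n => ?_)
    have hq'feas : q' ∈ calFeas (N := N) (S := S) (A := A) (ε (φ n)) :=
      ⟨hq'.1, hq'.2.1, fun i s a => le_trans (hq'.2.2 i s a) (hε0 (φ n))⟩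
    exact (hqS (φ n)).2 q' hq'feas
  have hUq : qbar ∈ U := hU0 hopt
  have hev : ∀ᶠ n in Filter.atTop, (q ∘ φ) n ∈ U :=
    hconv.eventually (hU.eventually_mem hUq)
  obtain ⟨n, hn⟩ := hev.exists
  exact hqU (φ n) hn
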